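/- Let λ, λ' ∈ ℂ be nonzero and ω, ω', B' ∈ V with b(ω,ω) > 0 and b(ω',ω') > 0. Set φ = λ·e^{iω} (i.e., e^{B+iω} with B = 0) and φ' = λ'·e^{B'+iω'} in W_ℂ. Then the planes P_φ and P_{φ'} are pointwise orthogonal with respect to the Mukai pairing and ⟨φ,φ̄⟩ = ⟨φ',φ̄'⟩ if and only if b(ω,ω') = 0, b(ω,B') = 0, b(ω',B') = 0, b(B',B') = b(ω,ω) + b(ω',ω'), and |λ|²·b(ω,ω) = |λ'|²·b(ω',ω'). -/

import Mathlib

noncomputable section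

/-- ℂ-bilinear extension of `b` to `V_ℂ = V × V` (a pair `(x, y)` represents `x + i y`). -/
def bC {V : Type*} [AddCommGroup V] [Module ℝ V]
    (b : V →ₗ[ℝ] V →ₗ[ℝ] ℝ) (φ ψ : V × V) : ℂ :=
  ⟨b φ.1 ψ.1 - b φ.2 ψ.2, b φ.1 ψ.2 + b φ.2 ψ.1⟩

/-- Complex conjugation on `V_ℂ = V × V`. -/
def conjV {V : Type*} [AddCommGroup V] [Module ℝ V] (φ : V × V) : V × V :=
  (φ.1, -φ.2)

/-- The ℂ-bilinear Mukai pairing on `W_ℂ = ℂ × V_ℂ × ℂ`. -/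
def mukaiC {V : Type*} [AddCommGroup V] [Module ℝ V]
    (b : V →ₗ[ℝ] V →ₗ[ℝ] ℝ) (w w' : ℂ × (V × V) × ℂ) : ℂ :=
  bC b w.2.1 w'.2.1 - w.1 * w'.2.2 - w.2.2 * w'.1

/-- Complex conjugation on `W_ℂ = ℂ × V_ℂ × ℂ`. -/
def conjW {V : Type*} [AddCommGroup V] [Module ℝ V]
    (w : ℂ × (V × V) × ℂ) : ℂ × (V × V) × ℂ :=
  ((starRingEnd ℂ) w.1, conjV w.2.1, (starRingEnd ℂ) w.2.2)

/-- Scalar multiplication by `λ ∈ ℂ` on `V_ℂ = V × V`. -/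
def csmul {V : Type*} [AddCommGroup V] [Module ℝ V] (lam : ℂ) (x : V × V) : V × V :=
  (lam.re • x.1 - lam.im • x.2, lam.re • x.2 + lam.im • x.1)

/-- Scalar multiplication by `λ ∈ ℂ` on `W_ℂ = ℂ × V_ℂ × ℂ`. -/
def smulW {V : Type*} [AddCommGroup V] [Module ℝ V]
    (lam : ℂ) (w : ℂ × (V × V) × ℂ) : ℂ × (V × V) × ℂ :=
  (lam * w.1, csmul lam w.2.1, lam * w.2.2)

/-- `e^{B+iω} = (1, B+iω, ½(b(B,B)−b(ω,ω)) + i·b(B,ω)) ∈ W_ℂ` for `B, ω ∈ V`. -/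
def expB {V : Type*} [AddCommGroup V] [Module ℝ V]
    (b : V →ₗ[ℝ] V →ₗ[ℝ] ℝ) (B ω : V) : ℂ × (V × V) × ℂ :=
  (1, (B, ω), ⟨(b B B - b ω ω) / 2, b B ω⟩)

/-- The Mukai pairing on `W = ℝ × V × ℝ`. -/
def mukai {V : Type*} [AddCommGroup V] [Module ℝ V]
    (b : V →ₗ[ℝ] V →ₗ[ℝ] ℝ) (w w' : ℝ × V × ℝ) : ℝ :=
  b w.2.1 w'.2.1 - w.1 * w'.2.2 - w.2.2 * w'.1

/-- The real part of `ψ ∈ W_ℂ`, an element of `W = ℝ × V × ℝ`. -/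
def ReW {V : Type*} [AddCommGroup V] [Module ℝ V]
    (w : ℂ × (V × V) × ℂ) : ℝ × V × ℝ :=
  (w.1.re, w.2.1.1, w.2.2.re)

/-- The imaginary part of `ψ ∈ W_ℂ`, an element of `W = ℝ × V × ℝ`. -/
def ImW {V : Type*} [AddCommGroup V] [Module ℝ V]
    (w : ℂ × (V × V) × ℂ) : ℝ × V × ℝ :=
  (w.1.im, w.2.1.2, w.2.2.im)

/-- The real plane `P_ψ = ℝ·Re ψ + ℝ·Im ψ ⊆ W` of `ψ ∈ W_ℂ`. -/
def PW {V : Type*} [AddCommGroup V] [Module ℝ V]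
    (w : ℂ × (V × V) × ℂ) : Submodule ℝ (ℝ × V × ℝ) :=
  Submodule.span ℝ {ReW w, ImW w}

/-- `P_ψ` and `P_{ψ'}` are pointwise orthogonal for the Mukai pairing. -/
def PointwiseOrth {V : Type*} [AddCommGroup V] [Module ℝ V]
    (b : V →ₗ[ℝ] V →ₗ[ℝ] ℝ) (w w' : ℂ × (V × V) × ℂ) : Prop :=
  ∀ u ∈ PW w, ∀ v ∈ PW w', mukai b u v = 0

/-!
Let `λ, λ' ∈ ℂ` be nonzero and `ω, ω', B' ∈ V` with `b(ω,ω) > 0`, `b(ω',ω') > 0`.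
Set `φ = λ·e^{iω}` and `φ' = λ'·e^{B'+iω'}`. Then `P_φ ⊥ P_{φ'}` pointwise and
`⟨φ,φ̄⟩ = ⟨φ',φ̄'⟩` iff `b(ω,ω') = 0`, `b(ω,B') = 0`, `b(ω',B') = 0`,
`b(B',B') = b(ω,ω) + b(ω',ω')`, and `|λ|²·b(ω,ω) = |λ'|²·b(ω',ω')`.
-/


lemma mukai_left_lin {V : Type*} [AddCommGroup V] [Module ℝ V]
    (b : V →ₗ[ℝ] V →ₗ[ℝ] ℝ) (x y : ℝ) (u v w : ℝ × V × ℝ) :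
    mukai b (x • u + y • v) w = x * mukai b u w + y * mukai b v w := by
  simp [mukai, map_add, map_smul, LinearMap.add_apply, LinearMap.smul_apply, smul_eq_mul]
  ring

lemma mukai_right_lin {V : Type*} [AddCommGroup V] [Module ℝ V]
    (b : V →ₗ[ℝ] V →ₗ[ℝ] ℝ) (x y : ℝ) (u v w : ℝ × V × ℝ) :
    mukai b w (x • u + y • v) = x * mukai b w u + y * mukai b w v := by
  simp [mukai, map_add, map_smul, smul_eq_mul]
  ring

lemma pointwiseOrth_iff {V : Type*} [AddCommGroup V] [Module ℝ V]
    (b : V →ₗ[ℝ] V →ₗ[ℝ] ℝ) (w w' : ℂ × (V × V) × ℂ) :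
    PointwiseOrth b w w' ↔
      (mukai b (ReW w) (ReW w') = 0 ∧ mukai b (ReW w) (ImW w') = 0 ∧
       mukai b (ImW w) (ReW w') = 0 ∧ mukai b (ImW w) (ImW w') = 0) := by
  constructor
  · intro h
    have hR : ReW w ∈ PW w := Submodule.subset_span (Set.mem_insert _ _)
    have hI : ImW w ∈ PW w := Submodule.subset_span (Set.mem_insert_of_mem _ rfl)
    have hR' : ReW w' ∈ PW w' := Submodule.subset_span (Set.mem_insert _ _)
    have hI' : ImW w' ∈ PW w' := Submodule.subset_span (Set.mem_insert_of_mem _ rfl)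
    exact ⟨h _ hR _ hR', h _ hR _ hI', h _ hI _ hR', h _ hI _ hI'⟩
  · rintro ⟨h1, h2, h3, h4⟩ u hu v hv
    obtain ⟨x, y, rfl⟩ := Submodule.mem_span_pair.mp hu
    obtain ⟨x', y', rfl⟩ := Submodule.mem_span_pair.mp hv
    rw [mukai_left_lin, mukai_right_lin, mukai_right_lin, h1, h2, h3, h4]
    ring

theorem hyperKahler_structure_typeA_typeA
    {V : Type*} [AddCommGroup V] [Module ℝ V]
    (b : V →ₗ[ℝ] V →ₗ[ℝ] ℝ) (hsymm : ∀ x y : V, b x y = b y x)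
    (lam lam' : ℂ) (hlam : lam ≠ 0) (hlam' : lam' ≠ 0)
    (ω ω' B' : V) (hω : 0 < b ω ω) (hω' : 0 < b ω' ω') :
    (PointwiseOrth b (smulW lam (expB b 0 ω)) (smulW lam' (expB b B' ω')) ∧
      mukaiC b (smulW lam (expB b 0 ω)) (conjW (smulW lam (expB b 0 ω)))
        = mukaiC b (smulW lam' (expB b B' ω')) (conjW (smulW lam' (expB b B' ω')))) ↔
    (b ω ω' = 0 ∧ b ω B' = 0 ∧ b ω' B' = 0 ∧
      b B' B' = b ω ω + b ω' ω' ∧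
      ‖lam‖ ^ 2 * b ω ω = ‖lam'‖ ^ 2 * b ω' ω') := by

  have hN : lam.re * lam.re + lam.im * lam.im ≠ 0 := by
    have h := Complex.normSq_pos.mpr hlam
    rw [Complex.normSq_apply] at h
    exact ne_of_gt h
  have hN' : lam'.re * lam'.re + lam'.im * lam'.im ≠ 0 := by
    have h := Complex.normSq_pos.mpr hlam'
    rw [Complex.normSq_apply] at h
    exact ne_of_gt h
  rw [pointwiseOrth_iff]
  simp only [mukai, mukaiC, bC, ReW, ImW, smulW, expB, csmul, conjW, conjV, map_zero,
    LinearMap.zero_apply, map_add, map_sub, map_smul, map_neg, LinearMap.add_apply,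
    LinearMap.sub_apply, LinearMap.smul_apply, LinearMap.neg_apply, smul_eq_mul,
    Complex.mul_re, Complex.mul_im, mul_one, Complex.one_re, Complex.one_im,
    Complex.ext_iff, Complex.sub_re, Complex.sub_im, Complex.conj_re, Complex.conj_im,
    Complex.sq_norm, Complex.normSq_apply]
  rw [hsymm B' ω']
  set a := lam.re
  set c := lam.im
  set a' := lam'.re
  set c' := lam'.im
  set t := b ω B' with hdt
  set s := b ω ω' with hds
  set r := b ω' B' with hdr
  set q := b ω ω with hdq
  set q' := b ω' ω' with hdq'
  set p := b B' B' with hdp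
  constructor
  · rintro ⟨⟨h1, h2, h3, h4⟩, h5re, -⟩
    have e1 : (a * a + c * c) * (a' * a' + c' * c') * (t + r) = 0 := by
      linear_combination (a * a' + c * c') * h3 - (a * a' + c * c') * h2 -
        (c * a' - a * c') * h1 - (c * a' - a * c') * h4
    have e2 : (a * a + c * c) * (a' * a' + c' * c') * ((q + q' - p) / 2 + s) = 0 := by
      linear_combination (c * a' - a * c') * h3 - (c * a' - a * c') * h2 +
        (a * a' + c * c') * h1 + (a * a' + c * c') * h4
    have e3 : (a * a + c * c) * (a' * a' + c' * c') * (t - r) = 0 := by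
      linear_combination (a * a' - c * c') * h3 + (a * a' - c * c') * h2 -
        (c * a' + a * c') * h1 + (c * a' + a * c') * h4
    have e4 : (a * a + c * c) * (a' * a' + c' * c') * ((q + q' - p) / 2 - s) = 0 := by
      linear_combination (c * a' + a * c') * h3 + (c * a' + a * c') * h2 +
        (a * a' - c * c') * h1 - (a * a' - c * c') * h4
    have hNN : (a * a + c * c) * (a' * a' + c' * c') ≠ 0 := mul_ne_zero hN hN'
    have f1 : t + r = 0 := by
      rcases mul_eq_zero.mp e1 with h | h
      · exact absurd h hNN
      · exact h
    have f2 : (q + q' - p) / 2 + s = 0 := by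
      rcases mul_eq_zero.mp e2 with h | h
      · exact absurd h hNN
      · exact h
    have f3 : t - r = 0 := by
      rcases mul_eq_zero.mp e3 with h | h
      · exact absurd h hNN
      · exact h
    have f4 : (q + q' - p) / 2 - s = 0 := by
      rcases mul_eq_zero.mp e4 with h | h
      · exact absurd h hNN
      · exact h
    refine ⟨by linarith, by linarith, by linarith, by linarith, by linarith [h5re]⟩
  · rintro ⟨hs, ht, hr, hp, habs⟩
    refine ⟨⟨?_, ?_, ?_, ?_⟩, ?_, ?_⟩
    · linear_combination (-(c * a')) * ht + c * c' * hs + a * c' * hr - a * a' / 2 * hp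
    · linear_combination (-(c * c')) * ht - c * a' * hs - a * a' * hr - a * c' / 2 * hp
    · linear_combination (a * a') * ht - a * c' * hs + c * c' * hr - c * a' / 2 * hp
    · linear_combination (a * c') * ht + a * a' * hs - c * a' * hr - c * c' / 2 * hp
    · linear_combination 2 * habs
    · ring
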